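/- Let F be a hyperfield and T a subgroup of its multiplicative group. The relation x ∼ y iff x·s = y·t for some s, t ∈ T is an equivalence relation on F, and the induced operations (class of x is in class of y + class of z iff x·s ∈ y·t + z·u for some s,t,u ∈ T; multiplication and negation induced) make the quotient F/_m T a hyperfield. -/

import Mathlib

/-- A hyperfield: a hypergroup with a compatible commutative monoid
multiplication with identity `one ≠ zero`, `0·a = 0`, distributivity over the
multivalued addition, and every nonzero element invertible. -/
structure IsHyperfield {F : Type*} (zero one : F) (hadd : F → F → Set F)
    (neg : F → F) (mul : F → F → F) : Prop where
  hadd_nonempty : ∀ a b : F, (hadd a b).Nonempty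
  hadd_comm : ∀ a b : F, hadd a b = hadd b a
  hadd_zero : ∀ a : F, hadd a zero = {a}
  hadd_assoc : ∀ a b c : F, (⋃ x ∈ hadd a b, hadd x c) = ⋃ x ∈ hadd b c, hadd a x
  zero_mem_sub : ∀ a : F, zero ∈ hadd a (neg a)
  exchange : ∀ a b c : F, a ∈ hadd b c → c ∈ hadd a (neg b)
  mul_assoc' : ∀ a b c : F, mul (mul a b) c = mul a (mul b c)
  mul_comm' : ∀ a b : F, mul a b = mul b a
  one_mul' : ∀ a : F, mul one a = a
  zero_mul' : ∀ a : F, mul zero a = zero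
  distrib : ∀ a b c : F, mul a '' hadd b c = hadd (mul a b) (mul a c)
  one_ne_zero' : one ≠ zero
  exists_inv : ∀ a : F, a ≠ zero → ∃ b : F, mul a b = one
/-- The equivalence relation `x ∼ y` iff `xs = yt` for some `s, t ∈ T`. -/
def simRel {F : Type*} (mul : F → F → F) (T : Set F) : F → F → Prop :=
  fun x y => ∃ s ∈ T, ∃ t ∈ T, mul x s = mul y t

/-- The induced multivalued addition on the quotient:
`x̄ ∈ ȳ + z̄` iff `xs ∈ yt + zu` for some `s, t, u ∈ T`. -/
def quotHadd {F : Type*} (mul : F → F → F) (hadd : F → F → Set F) (T : Set F) :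
    Quot (simRel mul T) → Quot (simRel mul T) → Set (Quot (simRel mul T)) :=
  fun Y Z => {X | ∃ x y z : F, X = Quot.mk _ x ∧ Y = Quot.mk _ y ∧ Z = Quot.mk _ z ∧
    ∃ s ∈ T, ∃ t ∈ T, ∃ u ∈ T, mul x s ∈ hadd (mul y t) (mul z u)}

/-- Auxiliary predicate: `x ∈ yt + zu` for some `t, u ∈ T`. -/
def simP {F : Type*} (hadd : F → F → Set F) (mul : F → F → F) (T : Set F)
    (x y z : F) : Prop :=
  ∃ t ∈ T, ∃ u ∈ T, x ∈ hadd (mul y t) (mul z u)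

/-- For a hyperfield `F` and a subgroup `T` of its multiplicative group, the
relation `x ∼ y ⟺ xs = yt` for some `s,t ∈ T` is an equivalence relation, the
induced operations are well-defined, and the quotient `F/_m T` is again a
hyperfield. -/
theorem stmt_11 {F : Type*} (zero one : F) (hadd : F → F → Set F)
    (neg : F → F) (mul : F → F → F)
    (hF : IsHyperfield zero one hadd neg mul)
    (T : Set F) (hT0 : ∀ t ∈ T, t ≠ zero) (hT1 : one ∈ T)
    (hTmul : ∀ s ∈ T, ∀ t ∈ T, mul s t ∈ T)
    (hTinv : ∀ s ∈ T, ∃ s' ∈ T, mul s s' = one) :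
    Equivalence (simRel mul T) ∧
    -- the induced multiplication and negation are well-defined
    (∀ x x' y y' : F, simRel mul T x x' → simRel mul T y y' →
      simRel mul T (mul x y) (mul x' y') ∧ simRel mul T (neg x) (neg x')) ∧
    -- the induced multivalued addition is well-defined
    (∀ x x' y y' z z' : F, simRel mul T x x' → simRel mul T y y' → simRel mul T z z' →
      ((∃ s ∈ T, ∃ t ∈ T, ∃ u ∈ T, mul x s ∈ hadd (mul y t) (mul z u)) ↔
       (∃ s ∈ T, ∃ t ∈ T, ∃ u ∈ T, mul x' s ∈ hadd (mul y' t) (mul z' u)))) ∧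
    -- the quotient is a hyperfield
    IsHyperfield (F := Quot (simRel mul T))
      (Quot.mk _ zero) (Quot.mk _ one)
      (quotHadd mul hadd T)
      (fun Y => Quot.mk _ (neg Y.out))
      (fun Y Z => Quot.mk _ (mul Y.out Z.out)) := by
  set r := simRel mul T with hr
  -- basic commutative monoid facts
  have hmul_one : ∀ a, mul a one = a := fun a => by rw [hF.mul_comm', hF.one_mul']
  have massoc := hF.mul_assoc'
  have mcomm := hF.mul_comm'
  have sw : ∀ a p q, mul (mul a p) q = mul (mul a q) p := fun a p q => by
    rw [massoc, mcomm p q, ← massoc]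
  have mlc : ∀ a b c, mul a (mul b c) = mul b (mul a c) := fun a b c => by
    rw [← massoc, mcomm a b, massoc]
  have rearr : ∀ a b c d, mul (mul a b) (mul c d) = mul (mul a c) (mul b d) := fun a b c d => by
    rw [massoc, mlc b c d, ← massoc]
  -- negation facts
  have inv_unique : ∀ a b, zero ∈ hadd a b → b = neg a := by
    intro a b h
    have h2 := hF.exchange zero a b h
    rw [hF.hadd_comm, hF.hadd_zero] at h2
    exact h2
  have neg_mul : ∀ a b, mul a (neg b) = neg (mul a b) := by
    intro a b
    refine inv_unique _ _ ?_
    have hd := hF.distrib a b (neg b)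
    have hz : zero ∈ mul a '' hadd b (neg b) :=
      ⟨zero, hF.zero_mem_sub b, by rw [mcomm, hF.zero_mul']⟩
    rw [hd] at hz
    exact hz
  -- the equivalence relation
  have hEq : Equivalence r := by
    constructor
    · intro x; exact ⟨one, hT1, one, hT1, rfl⟩
    · rintro x y ⟨s, hs, t, ht, h⟩; exact ⟨t, ht, s, hs, h.symm⟩
    · rintro x y z ⟨s, hs, t, ht, h1⟩ ⟨s', hs', t', ht', h2⟩
      refine ⟨mul s s', hTmul _ hs _ hs', mul t' t, hTmul _ ht' _ ht, ?_⟩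
      calc mul x (mul s s') = mul (mul x s) s' := (massoc _ _ _).symm
        _ = mul (mul y t) s' := by rw [h1]
        _ = mul (mul y s') t := sw _ _ _
        _ = mul (mul z t') t := by rw [h2]
        _ = mul z (mul t' t) := massoc _ _ _
  have eq_iff : ∀ x y : F, (Quot.mk r x = Quot.mk r y) ↔ r x y := fun x y =>
    Quot.eq.trans hEq.eqvGen_iff
  -- scaling lemmas
  have scale : ∀ a b c s, a ∈ hadd b c → mul a s ∈ hadd (mul b s) (mul c s) := by
    intro a b c s h
    have hd := hF.distrib s b c
    have h2 : mul s a ∈ mul s '' hadd b c := ⟨a, h, rfl⟩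
    rw [hd, mcomm s b, mcomm s c] at h2
    rwa [mcomm a s]
  have scaleL : ∀ a b c w, w ∈ hadd b c → mul a w ∈ hadd (mul a b) (mul a c) := by
    intro a b c w h
    rw [← hF.distrib a b c]
    exact ⟨w, h, rfl⟩
  -- P and its invariance
  have P_iff : ∀ x y z, (∃ s ∈ T, ∃ t ∈ T, ∃ u ∈ T, mul x s ∈ hadd (mul y t) (mul z u)) ↔
      simP hadd mul T x y z := by
    intro x y z
    constructor
    · rintro ⟨s, hs, t, ht, u, hu, h⟩
      obtain ⟨s', hs', hss'⟩ := hTinv s hs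
      have h2 := scale _ _ _ s' h
      rw [massoc x s s', hss', hmul_one, massoc y t s', massoc z u s'] at h2
      exact ⟨mul t s', hTmul _ ht _ hs', mul u s', hTmul _ hu _ hs', h2⟩
    · rintro ⟨t, ht, u, hu, h⟩
      exact ⟨one, hT1, t, ht, u, hu, by rwa [hmul_one]⟩
  have stepx : ∀ x x' y z, r x x' → simP hadd mul T x y z → simP hadd mul T x' y z := by
    rintro x x' y z ⟨s0, hs0, s0', hs0', hx⟩ ⟨t, ht, u, hu, h⟩
    have h2 := scale _ _ _ s0 h
    rw [hx, massoc y t s0, massoc z u s0] at h2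
    exact (P_iff _ _ _).mp
      ⟨s0', hs0', mul t s0, hTmul _ ht _ hs0, mul u s0, hTmul _ hu _ hs0, h2⟩
  have stepy : ∀ x y y' z, r y y' → simP hadd mul T x y z → simP hadd mul T x y' z := by
    rintro x y y' z ⟨t0, ht0, t0', ht0', hy⟩ ⟨t, ht, u, hu, h⟩
    have h2 := scale _ _ _ t0 h
    rw [sw y t t0, hy, massoc y' t0' t, massoc z u t0] at h2
    exact (P_iff _ _ _).mp
      ⟨t0, ht0, mul t0' t, hTmul _ ht0' _ ht, mul u t0, hTmul _ hu _ ht0, h2⟩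
  have Pswap : ∀ a b c, simP hadd mul T a b c ↔ simP hadd mul T a c b := by
    intro a b c
    constructor <;> rintro ⟨t, ht, u, hu, h⟩ <;> exact ⟨u, hu, t, ht, by rwa [hF.hadd_comm]⟩
  have stepz : ∀ x y z z', r z z' → simP hadd mul T x y z → simP hadd mul T x y z' := by
    intro x y z z' hz h
    exact (Pswap _ _ _).mpr (stepy _ _ _ _ hz ((Pswap _ _ _).mp h))
  have Pwd : ∀ {x x' y y' z z'}, r x x' → r y y' → r z z' →
      (simP hadd mul T x y z ↔ simP hadd mul T x' y' z') := by
    intro x x' y y' z z' hx hy hz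
    constructor
    · intro h; exact stepz _ _ _ _ hz (stepy _ _ _ _ hy (stepx _ _ _ _ hx h))
    · intro h
      exact stepz _ _ _ _ (hEq.symm hz) (stepy _ _ _ _ (hEq.symm hy)
        (stepx _ _ _ _ (hEq.symm hx) h))
  -- well-definedness of multiplication and negation
  have mulwd : ∀ {x x' y y'}, r x x' → r y y' → r (mul x y) (mul x' y') := by
    rintro x x' y y' ⟨s, hs, s', hs', h1⟩ ⟨t, ht, t', ht', h2⟩
    refine ⟨mul s t, hTmul _ hs _ ht, mul s' t', hTmul _ hs' _ ht', ?_⟩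
    rw [rearr x y s t, h1, h2, rearr x' s' y' t']
  have negwd : ∀ {x x'}, r x x' → r (neg x) (neg x') := by
    rintro x x' ⟨s, hs, s', hs', h1⟩
    refine ⟨s, hs, s', hs', ?_⟩
    rw [mcomm (neg x) s, neg_mul s x, mcomm s x, h1, mcomm (neg x') s', neg_mul s' x',
      mcomm s' x']
  -- quotient membership lemmas
  have mem_def : ∀ (X Y Z : Quot r), X ∈ quotHadd mul hadd T Y Z ↔
      ∃ x y z : F, X = Quot.mk r x ∧ Y = Quot.mk r y ∧ Z = Quot.mk r z ∧
        ∃ s ∈ T, ∃ t ∈ T, ∃ u ∈ T, mul x s ∈ hadd (mul y t) (mul z u) :=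
    fun _ _ _ => Iff.rfl
  have mem_mk : ∀ x y z : F,
      Quot.mk r x ∈ quotHadd mul hadd T (Quot.mk r y) (Quot.mk r z) ↔ simP hadd mul T x y z := by
    intro x y z
    rw [mem_def]
    constructor
    · rintro ⟨x0, y0, z0, hx0, hy0, hz0, hex⟩
      exact (Pwd ((eq_iff _ _).mp hx0) ((eq_iff _ _).mp hy0) ((eq_iff _ _).mp hz0)).mpr
        ((P_iff _ _ _).mp hex)
    · intro h
      exact ⟨x, y, z, rfl, rfl, rfl, (P_iff _ _ _).mpr h⟩
  have out_sim : ∀ x : F, r (Quot.mk r x).out x := fun x => (eq_iff _ _).mp (Quot.out_eq _)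
  have qm : ∀ x y : F, Quot.mk r (mul (Quot.mk r x).out (Quot.mk r y).out) =
      Quot.mk r (mul x y) := fun x y => Quot.sound (mulwd (out_sim x) (out_sim y))
  have qneg_mk : ∀ x : F, Quot.mk r (neg (Quot.mk r x).out) = Quot.mk r (neg x) :=
    fun x => Quot.sound (negwd (out_sim x))
  have sim_zero : ∀ z, r zero z → z = zero := by
    rintro z ⟨s0, hs0, t0, ht0, h0⟩
    obtain ⟨t0', ht0', htt⟩ := hTinv t0 ht0
    have h2 : mul (mul z t0) t0' = mul (mul zero s0) t0' := by rw [h0]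
    rwa [massoc z t0 t0', htt, hmul_one, hF.zero_mul' s0, hF.zero_mul' t0'] at h2
  have qcomm : ∀ A B, quotHadd mul hadd T A B = quotHadd mul hadd T B A := by
    intro A B
    ext X
    rw [mem_def, mem_def]
    constructor <;> rintro ⟨x, y, z, h1, h2, h3, s, hs, t, ht, u, hu, h⟩ <;>
      exact ⟨x, z, y, h1, h3, h2, s, hs, u, hu, t, ht, by rwa [hF.hadd_comm]⟩
  have hsub : ∀ A B C, (⋃ X ∈ quotHadd mul hadd T A B, quotHadd mul hadd T X C) ⊆
      ⋃ X ∈ quotHadd mul hadd T B C, quotHadd mul hadd T A X := by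
    intro A B C X hX
    simp only [Set.mem_iUnion] at hX ⊢
    obtain ⟨W, hW, hXW⟩ := hX
    rw [mem_def] at hW
    obtain ⟨w, a, b, rfl, rfl, rfl, hexw⟩ := hW
    rw [mem_def] at hXW
    obtain ⟨x, w1, c, rfl, hw1, rfl, hexx⟩ := hXW
    have Pw := (P_iff _ _ _).mp hexw
    have Px : simP hadd mul T x w c :=
      stepy _ _ _ _ (hEq.symm ((eq_iff _ _).mp hw1)) ((P_iff _ _ _).mp hexx)
    obtain ⟨t, ht, u, hu, hw⟩ := Pw
    obtain ⟨t', ht', u', hu', hx⟩ := Px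
    have hw2 := scale _ _ _ t' hw
    rw [massoc a t t', massoc b u t'] at hw2
    have hx2 : x ∈ ⋃ p ∈ hadd (mul a (mul t t')) (mul b (mul u t')), hadd p (mul c u') :=
      Set.mem_biUnion hw2 hx
    rw [hF.hadd_assoc] at hx2
    simp only [Set.mem_iUnion] at hx2
    obtain ⟨v, hv, hxv⟩ := hx2
    refine ⟨Quot.mk r v,
      (mem_mk v b c).mpr ⟨mul u t', hTmul _ hu _ ht', u', hu', hv⟩,
      (mem_mk x a v).mpr ⟨mul t t', hTmul _ ht _ ht', one, hT1, ?_⟩⟩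
    rwa [hmul_one]
  refine ⟨hEq, ?_, ?_, ?_⟩
  · intro x x' y y' hx hy
    exact ⟨mulwd hx hy, negwd hx⟩
  · intro x x' y y' z z' hx hy hz
    rw [P_iff x y z, P_iff x' y' z']
    exact Pwd hx hy hz
  constructor
  -- hadd_nonempty
  · intro A B
    obtain ⟨y, rfl⟩ := Quot.exists_rep A
    obtain ⟨z, rfl⟩ := Quot.exists_rep B
    obtain ⟨w, hw⟩ := hF.hadd_nonempty y z
    exact ⟨Quot.mk r w, (mem_mk w y z).mpr ⟨one, hT1, one, hT1,
      by rw [hmul_one y, hmul_one z]; exact hw⟩⟩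
  -- hadd_comm
  · exact qcomm
  -- hadd_zero
  · intro A
    obtain ⟨a, rfl⟩ := Quot.exists_rep A
    ext X
    simp only [Set.mem_singleton_iff]
    constructor
    · intro hX
      rw [mem_def] at hX
      obtain ⟨x, y, z, h1, h2, h3, s, hs, t, ht, u, hu, h⟩ := hX
      have hz : z = zero := sim_zero z ((eq_iff _ _).mp h3)
      rw [hz, hF.zero_mul' u, hF.hadd_zero] at h
      rw [h1, Quot.sound (⟨s, hs, t, ht, h⟩ : r x y), ← h2]
    · rintro rfl
      refine (mem_mk a a zero).mpr ⟨one, hT1, one, hT1, ?_⟩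
      rw [hmul_one a, hF.zero_mul' one, hF.hadd_zero]
      exact rfl
  -- hadd_assoc
  · intro A B C
    apply Set.Subset.antisymm (hsub A B C)
    intro X hX
    have hX2 : X ∈ ⋃ W ∈ quotHadd mul hadd T C B, quotHadd mul hadd T W A := by
      simp only [Set.mem_iUnion] at hX ⊢
      obtain ⟨W, hW, h2⟩ := hX
      rw [qcomm B C] at hW
      rw [qcomm A W] at h2
      exact ⟨W, hW, h2⟩
    have h3 := hsub C B A hX2
    simp only [Set.mem_iUnion] at h3 ⊢
    obtain ⟨W, hW, h2⟩ := h3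
    rw [qcomm B A] at hW
    rw [qcomm C W] at h2
    exact ⟨W, hW, h2⟩
  -- zero_mem_sub
  · intro A
    obtain ⟨a, rfl⟩ := Quot.exists_rep A
    show Quot.mk r zero ∈ quotHadd mul hadd T (Quot.mk r a) (Quot.mk r (neg (Quot.mk r a).out))
    rw [qneg_mk a]
    refine (mem_mk zero a (neg a)).mpr ⟨one, hT1, one, hT1, ?_⟩
    rw [hmul_one a, hmul_one (neg a)]
    exact hF.zero_mem_sub a
  -- exchange
  · intro A B C hA
    rw [mem_def] at hA
    obtain ⟨a, b, c, rfl, rfl, rfl, hex⟩ := hA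
    obtain ⟨t, ht, u, hu, h⟩ := (P_iff _ _ _).mp hex
    have h2 := hF.exchange _ _ _ h
    obtain ⟨u', hu', huu⟩ := hTinv u hu
    have h3 := scale _ _ _ u' h2
    rw [massoc c u u', huu, hmul_one] at h3
    have hnb : mul (neg (mul b t)) u' = mul (neg b) (mul t u') := by
      rw [mcomm (neg (mul b t)) u', neg_mul u' (mul b t), mcomm u' (mul b t), massoc b t u',
        mcomm b (mul t u'), ← neg_mul (mul t u') b, mcomm (mul t u') (neg b)]
    rw [hnb] at h3
    show Quot.mk r c ∈ quotHadd mul hadd T (Quot.mk r a) (Quot.mk r (neg (Quot.mk r b).out))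
    rw [qneg_mk b]
    exact (mem_mk c a (neg b)).mpr ⟨u', hu', mul t u', hTmul _ ht _ hu', h3⟩
  -- mul_assoc'
  · intro A B C
    obtain ⟨a, rfl⟩ := Quot.exists_rep A
    obtain ⟨b, rfl⟩ := Quot.exists_rep B
    obtain ⟨c, rfl⟩ := Quot.exists_rep C
    rw [qm a b, qm b c, qm (mul a b) c, qm a (mul b c), massoc]
  -- mul_comm'
  · intro A B
    obtain ⟨a, rfl⟩ := Quot.exists_rep A
    obtain ⟨b, rfl⟩ := Quot.exists_rep B
    rw [qm a b, qm b a, mcomm]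
  -- one_mul'
  · intro A
    obtain ⟨a, rfl⟩ := Quot.exists_rep A
    rw [qm one a, hF.one_mul']
  -- zero_mul'
  · intro A
    obtain ⟨a, rfl⟩ := Quot.exists_rep A
    rw [qm zero a, hF.zero_mul']
  -- distrib
  · intro A B C
    obtain ⟨a, rfl⟩ := Quot.exists_rep A
    obtain ⟨b, rfl⟩ := Quot.exists_rep B
    obtain ⟨c, rfl⟩ := Quot.exists_rep C
    ext X
    simp only [Set.mem_image, qm]
    constructor
    · rintro ⟨W, hW, rfl⟩
      rw [mem_def] at hW
      obtain ⟨w, b1, c1, rfl, hb1, hc1, hex⟩ := hW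
      have Pw : simP hadd mul T w b c :=
        (Pwd (hEq.refl w) (hEq.symm ((eq_iff _ _).mp hb1)) (hEq.symm ((eq_iff _ _).mp hc1))).mp
          ((P_iff _ _ _).mp hex)
      obtain ⟨t, ht, u, hu, h⟩ := Pw
      show Quot.mk r (mul (Quot.mk r a).out (Quot.mk r w).out) ∈ _
      rw [qm a w, qm a b, qm a c]
      refine (mem_mk (mul a w) (mul a b) (mul a c)).mpr ⟨t, ht, u, hu, ?_⟩
      have h2 := scaleL a _ _ _ h
      rwa [← massoc a b t, ← massoc a c u] at h2
    · intro hX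
      rw [mem_def] at hX
      obtain ⟨x, p, q, rfl, hp, hq, hex⟩ := hX
      rw [qm a b] at hp
      rw [qm a c] at hq
      have Px : simP hadd mul T x (mul a b) (mul a c) :=
        (Pwd (hEq.refl x) (hEq.symm ((eq_iff _ _).mp hp)) (hEq.symm ((eq_iff _ _).mp hq))).mp
          ((P_iff _ _ _).mp hex)
      obtain ⟨t, ht, u, hu, h⟩ := Px
      by_cases ha : a = zero
      · rw [ha] at h
        rw [hF.zero_mul' b, hF.zero_mul' t, hF.zero_mul' c, hF.zero_mul' u, hF.hadd_zero] at h
        have hx : x = zero := h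
        obtain ⟨w0, hw0⟩ := hF.hadd_nonempty b c
        refine ⟨Quot.mk r w0, (mem_mk w0 b c).mpr ⟨one, hT1, one, hT1,
          by rw [hmul_one b, hmul_one c]; exact hw0⟩, ?_⟩
        rw [qm a w0, ha, hF.zero_mul' w0, hx]
      · obtain ⟨a', haa⟩ := hF.exists_inv a ha
        have h2 := scaleL a' _ _ _ h
        rw [← massoc a' (mul a b) t, ← massoc a' a b, ← massoc a' (mul a c) u,
          ← massoc a' a c, mcomm a' a, haa, hF.one_mul' b, hF.one_mul' c] at h2
        refine ⟨Quot.mk r (mul a' x), (mem_mk (mul a' x) b c).mpr ⟨t, ht, u, hu, h2⟩, ?_⟩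
        rw [qm a (mul a' x), ← massoc a a' x, haa, hF.one_mul' x]
  -- one_ne_zero'
  · intro h
    obtain ⟨s, hs, t, ht, heq⟩ := (eq_iff one zero).mp h
    rw [hF.one_mul' s, hF.zero_mul' t] at heq
    exact hT0 s hs heq
  -- exists_inv
  · intro A hA
    obtain ⟨a, rfl⟩ := Quot.exists_rep A
    have ha : a ≠ zero := fun h => hA (by rw [h])
    obtain ⟨b, hb⟩ := hF.exists_inv a ha
    refine ⟨Quot.mk r b, ?_⟩
    rw [qm a b, hb]
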